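/- If f(z) = ∑_{n=0}^∞ a_n z^n is analytic on the unit disk with |f(z)| ≤ 1 for all |z| < 1, then for all real r with 0 ≤ r ≤ 1/3, the series ∑_{n=0}^∞ |a_n| r^n converges and ∑_{n=0}^∞ |a_n| r^n ≤ 1. -/

import Mathlib

open Metric Filter
open scoped ENNReal NNReal

lemma myHasFPS (h : ℂ → ℂ) (c : ℕ → ℂ)
    (hsum : ∀ w ∈ ball (0:ℂ) 1, HasSum (fun m => c m * w ^ m) (h w)) :
    HasFPowerSeriesOnBall h (FormalMultilinearSeries.ofScalars ℂ c) 0 1 := by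
  have hmem : ∀ w : ℂ, ‖w‖ < 1 → w ∈ ball (0:ℂ) 1 := by
    intro w hw; simpa [Complex.dist_eq] using hw
  have happ : ∀ (n : ℕ) (y : ℂ),
      (FormalMultilinearSeries.ofScalars ℂ c n) (fun _ => y) = c n * y ^ n := by
    intro n y
    rw [FormalMultilinearSeries.ofScalars_apply_eq, smul_eq_mul]
  refine ⟨?_, one_pos, ?_⟩
  · apply ENNReal.le_of_forall_nnreal_lt
    intro s hs
    apply FormalMultilinearSeries.le_radius_of_tendsto (l := 0)
    have hs1 : ((s:ℝ):ℂ) ∈ ball (0:ℂ) 1 := by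
      apply hmem
      simp only [Complex.norm_real, Real.norm_eq_abs, abs_of_nonneg s.coe_nonneg]
      exact_mod_cast hs
    have h2 := ((hsum _ hs1).summable).tendsto_atTop_zero.norm
    simp only [norm_zero] at h2
    convert h2 using 2 with n
    rw [FormalMultilinearSeries.ofScalars_norm]
    simp [norm_mul, norm_pow, Complex.norm_real, abs_of_nonneg s.coe_nonneg]
  · intro y hy
    have hy' : y ∈ ball (0:ℂ) 1 := by
      rw [show (1:ℝ≥0∞) = ((1:ℝ≥0):ℝ≥0∞) by norm_num, Metric.emetric_ball_nnreal] at hy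
      simpa using hy
    have := hsum y hy'
    simpa only [zero_add, happ] using this

lemma abs_sub_le_abs_one_sub_conj_mul {a b : ℂ} (ha : ‖a‖ ≤ 1)
    (hb : ‖b‖ ≤ 1) :
    ‖a - b‖ ≤ ‖1 - (starRingEnd ℂ) a * b‖ := by
  have ha' : a.re ^ 2 + a.im ^ 2 ≤ 1 := by
    have := Complex.sq_norm a
    rw [Complex.normSq_apply] at this
    nlinarith [norm_nonneg a]
  have hb' : b.re ^ 2 + b.im ^ 2 ≤ 1 := by
    have := Complex.sq_norm b
    rw [Complex.normSq_apply] at this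
    nlinarith [norm_nonneg b]
  rw [← Real.sqrt_sq (norm_nonneg (a - b)),
    ← Real.sqrt_sq (norm_nonneg (1 - (starRingEnd ℂ) a * b))]
  apply Real.sqrt_le_sqrt
  rw [Complex.sq_norm, Complex.sq_norm, Complex.normSq_apply, Complex.normSq_apply]
  simp only [Complex.sub_re, Complex.sub_im, Complex.one_re, Complex.one_im,
    Complex.mul_re, Complex.mul_im, Complex.conj_re, Complex.conj_im]
  nlinarith [mul_nonneg (sub_nonneg.2 ha') (sub_nonneg.2 hb')]

lemma schwarz_pick_zero (h : ℂ → ℂ) (c : ℕ → ℂ)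
    (hsum : ∀ w ∈ ball (0:ℂ) 1, HasSum (fun m => c m * w ^ m) (h w))
    (hb : ∀ w ∈ ball (0:ℂ) 1, ‖h w‖ ≤ 1) :
    ‖c 1‖ ≤ 1 - ‖c 0‖ ^ 2 := by
  have hps := myHasFPS h c hsum
  have hballeq : eball (0:ℂ) 1 = ball (0:ℂ) 1 := by
    rw [show (1:ℝ≥0∞) = ((1:ℝ≥0):ℝ≥0∞) by norm_num, Metric.emetric_ball_nnreal]
    norm_num
  have h0mem : (0:ℂ) ∈ ball (0:ℂ) 1 := by simp
  have hh0 : h 0 = c 0 := by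
    have h1 : HasSum (fun m => c m * (0:ℂ) ^ m) (c 0 * (0:ℂ) ^ 0) :=
      hasSum_single 0 (by intro m hm; simp [hm])
    have := (hsum 0 h0mem).unique h1
    simpa using this
  have hd1 : HasDerivAt h (c 1) 0 := by
    have := hps.hasFPowerSeriesAt.hasDerivAt
    rwa [FormalMultilinearSeries.ofScalars_apply_eq, smul_eq_mul, pow_one, mul_one] at this
  have hdiff : DifferentiableOn ℂ h (ball 0 1) := by
    have := hps.differentiableOn
    rwa [hballeq] at this
  have hc0le : ‖c 0‖ ≤ 1 := by rw [← hh0]; exact hb 0 h0mem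
  rcases eq_or_lt_of_le hc0le with heq | hlt
  · have hmax : IsMaxOn (norm ∘ h) (ball (0:ℂ) 1) 0 := by
      intro w hw
      simp only [Function.comp_apply, Set.mem_setOf_eq, hh0]
      calc ‖h w‖ ≤ 1 := hb w hw
        _ = ‖c 0‖ := heq.symm
        _ = ‖(c 0 : ℂ)‖ := rfl
    have hEq := Complex.eqOn_of_isPreconnected_of_isMaxOn_norm
      (convex_ball (0:ℂ) 1).isPreconnected isOpen_ball hdiff h0mem hmax
    have hev : h =ᶠ[nhds (0:ℂ)] (fun _ => h 0) := by
      filter_upwards [isOpen_ball.mem_nhds h0mem] with w hw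
      exact hEq hw
    have hzero : deriv h 0 = 0 := by
      rw [hev.deriv_eq]; exact deriv_const _ _
    rw [hd1.deriv] at hzero
    rw [hzero]
    simp [heq]
  · set a := c 0 with ha
    have hD : ∀ w ∈ ball (0:ℂ) 1, 1 - (starRingEnd ℂ) a * h w ≠ 0 := by
      intro w hw hzero
      have h1 : (1:ℂ) = (starRingEnd ℂ) a * h w := by linear_combination hzero
      have h2 : (1:ℝ) ≤ ‖(starRingEnd ℂ) a * h w‖ := by
        rw [← h1]; simp
      rw [norm_mul, Complex.norm_conj] at h2
      nlinarith [hb w hw, norm_nonneg a, norm_nonneg (h w)]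
    set g : ℂ → ℂ := fun w => (a - h w) / (1 - (starRingEnd ℂ) a * h w) with hg
    have hgb : ∀ w ∈ ball (0:ℂ) 1, ‖g w‖ ≤ 1 := by
      intro w hw
      rw [hg]
      simp only [norm_div]
      rw [div_le_one (norm_pos_iff.mpr (hD w hw))]
      simpa using abs_sub_le_abs_one_sub_conj_mul hlt.le (hb w hw)
    have hg0 : g 0 = 0 := by
      rw [hg]; simp [hh0]
    have hgdiff : DifferentiableOn ℂ g (ball 0 1) := by
      apply DifferentiableOn.div
      · exact (differentiableOn_const a).sub hdiff
      · exact (differentiableOn_const 1).sub ((differentiableOn_const _).mul hdiff)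
      · exact hD
    -- derivative of g at 0
    have hD0 : (1 - (starRingEnd ℂ) a * h 0) = ((1 - ‖a‖ ^ 2 : ℝ) : ℂ) := by
      rw [hh0]
      rw [show (starRingEnd ℂ) a * a = (Complex.normSq a : ℂ) by
        rw [mul_comm, Complex.mul_conj]]
      rw [← Complex.sq_norm]
      push_cast
      ring
    have hD0ne : (1 - (starRingEnd ℂ) a * h 0) ≠ 0 := hD 0 h0mem
    have hN : HasDerivAt (fun w => a - h w) (-(c 1)) 0 := by
      simpa [Pi.sub_def] using (hasDerivAt_const (0:ℂ) a).sub hd1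
    have hDd : HasDerivAt (fun w => 1 - (starRingEnd ℂ) a * h w)
        (-((starRingEnd ℂ) a * c 1)) 0 := by
      simpa [Pi.sub_def] using (hasDerivAt_const (0:ℂ) (1:ℂ)).sub (hd1.const_mul ((starRingEnd ℂ) a))
    have hq := hN.div hDd hD0ne
    have hpos : (0:ℝ) < 1 - ‖a‖ ^ 2 := by nlinarith [norm_nonneg a]
    have hcne : ((1 - ‖a‖ ^ 2 : ℝ) : ℂ) ≠ 0 := Complex.ofReal_ne_zero.2 hpos.ne'
    have hsub : a - h 0 = 0 := by rw [hh0, sub_self]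
    have hderiv_g : deriv g 0 = -(c 1) / ((1 - ‖a‖ ^ 2 : ℝ) : ℂ) := by
      have key : ∀ u X : ℂ, X ≠ 0 → u * X / X ^ 2 = u / X := by
        intro u X hX; field_simp
      rw [show g = ((fun w => a - h w) / fun w => 1 - (starRingEnd ℂ) a * h w) from rfl, hq.deriv, hsub, hD0, zero_mul, sub_zero, key _ _ hcne]
    have habs : ‖deriv g 0‖
        = ‖c 1‖ / (1 - ‖a‖ ^ 2) := by
      rw [hderiv_g, norm_div, norm_neg, Complex.norm_real, Real.norm_eq_abs, abs_of_pos hpos]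
    have hder_le : ‖deriv g 0‖ ≤ 1 := by
      apply le_of_forall_pos_le_add
      intro ε hε
      have hmaps : Set.MapsTo g (ball (0:ℂ) 1) (ball (g 0) (1 + ε)) := by
        intro w hw
        rw [hg0, mem_ball, Complex.dist_eq, sub_zero]
        exact lt_of_le_of_lt (hgb w hw) (by linarith)
      have := Complex.norm_deriv_le_div_of_mapsTo_ball hgdiff (hmaps.mono_right ball_subset_closedBall) one_pos
      simpa using this
    have hpos : (0:ℝ) < 1 - ‖a‖ ^ 2 := by nlinarith [norm_nonneg a]
    rw [habs, div_le_one hpos] at hder_le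
    exact hder_le

open Real in
lemma coeff_bound (f : ℂ → ℂ) (a : ℕ → ℂ)
    (hexp : ∀ z ∈ ball (0:ℂ) 1, HasSum (fun m => a m * z ^ m) (f z))
    (hb : ∀ z ∈ ball (0:ℂ) 1, ‖f z‖ ≤ 1)
    (n : ℕ) (hn : 1 ≤ n) :
    ‖a n‖ ≤ 1 - ‖a 0‖ ^ 2 := by
  have hn0 : (n:ℕ) ≠ 0 := by omega
  have hnC : (n:ℂ) ≠ 0 := Nat.cast_ne_zero.2 hn0
  set ζ : ℂ := Complex.exp (2 * π * Complex.I / n) with hζ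
  have hprim : IsPrimitiveRoot ζ n := Complex.isPrimitiveRoot_exp n hn0
  have hζn : ζ ^ n = 1 := hprim.pow_eq_one
  have hζabs : ‖ζ‖ = 1 := by
    rw [hζ, show 2 * π * Complex.I / n = ((2 * π / n : ℝ) : ℂ) * Complex.I by
      push_cast; ring]
    exact Complex.norm_exp_ofReal_mul_I _
  -- the key HasSum statement for each w in the ball
  have key : ∀ w ∈ ball (0:ℂ) 1, ∃ S : ℂ,
      HasSum (fun j => a (n*j) * w ^ j) S ∧ ‖S‖ ≤ 1 := by
    intro w hw
    have hwabs : ‖w‖ < 1 := by simpa [Complex.dist_eq] using hw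
    obtain ⟨z, hz⟩ := IsAlgClosed.exists_pow_nat_eq w (by omega : 0 < n)
    have hzabs : ‖z‖ < 1 := by
      by_contra hzc
      push_neg at hzc
      have : (1:ℝ) ≤ ‖z‖ ^ n := one_le_pow₀ hzc
      rw [← norm_pow, hz] at this
      linarith
    have hmemk : ∀ k : ℕ, ζ ^ k * z ∈ ball (0:ℂ) 1 := by
      intro k
      simp only [mem_ball, Complex.dist_eq, sub_zero, norm_mul, norm_pow, hζabs,
        one_pow, one_mul]
      exact hzabs
    have hk : ∀ k ∈ Finset.range n, HasSum (fun m => a m * (ζ^k * z) ^ m) (f (ζ^k * z)) :=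
      fun k _ => hexp _ (hmemk k)
    have hsum1 := hasSum_sum hk
    have hfun : (fun m => ∑ k ∈ Finset.range n, a m * (ζ^k * z) ^ m)
        = fun m => if n ∣ m then (n:ℂ) * (a m * z ^ m) else 0 := by
      funext m
      have hterm : ∀ k, a m * (ζ^k * z) ^ m = (a m * z ^ m) * (ζ^m) ^ k := by
        intro k
        rw [mul_pow, ← pow_mul, mul_comm k m, pow_mul]
        ring
      simp_rw [hterm]
      rw [← Finset.mul_sum]
      by_cases hdvd : n ∣ m
      · have h1 : ζ ^ m = 1 := (hprim.pow_eq_one_iff_dvd m).2 hdvd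
        rw [h1]
        simp [hdvd, mul_comm]
      · have h1 : ζ ^ m ≠ 1 := fun hc => hdvd ((hprim.pow_eq_one_iff_dvd m).1 hc)
        rw [geom_sum_eq h1, ← pow_mul, mul_comm m n, pow_mul, hζn, one_pow]
        simp [hdvd]
    rw [hfun] at hsum1
    have hsum2 := hsum1.mul_left ((n:ℂ)⁻¹)
    have hfun2 : (fun m => (n:ℂ)⁻¹ * if n ∣ m then (n:ℂ) * (a m * z ^ m) else 0)
        = fun m => if n ∣ m then a m * z ^ m else 0 := by
      funext m
      by_cases hdvd : n ∣ m
      · simp [hdvd]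
        field_simp
      · simp [hdvd]
    rw [hfun2] at hsum2
    set S : ℂ := (n:ℂ)⁻¹ * ∑ k ∈ Finset.range n, f (ζ^k * z) with hS
    have hinj : Function.Injective (fun j : ℕ => n * j) := fun x y hxy =>
      Nat.eq_of_mul_eq_mul_left (Nat.pos_of_ne_zero hn0) hxy
    have hvanish : ∀ m ∉ Set.range (fun j : ℕ => n * j),
        (if n ∣ m then a m * z ^ m else 0) = 0 := by
      intro m hm
      have : ¬ n ∣ m := by
        intro ⟨j, hj⟩
        exact hm ⟨j, hj.symm⟩
      simp [this]
    have hsum3 := (hinj.hasSum_iff hvanish).2 hsum2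
    refine ⟨S, ?_, ?_⟩
    · have heq : (fun j => (if n ∣ n * j then a (n*j) * z ^ (n*j) else 0))
          = fun j => a (n*j) * w ^ j := by
        funext j
        rw [if_pos (Dvd.intro j rfl), ← hz, ← pow_mul]
      rw [← heq]
      exact hsum3
    · rw [hS, norm_mul, norm_inv]
      have h1 : ‖∑ k ∈ Finset.range n, f (ζ^k * z)‖ ≤ n := by
        calc ‖∑ k ∈ Finset.range n, f (ζ^k * z)‖
            ≤ ∑ k ∈ Finset.range n, ‖f (ζ^k * z)‖ :=
              norm_sum_le _ _
          _ ≤ ∑ _k ∈ Finset.range n, (1:ℝ) :=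
              Finset.sum_le_sum (fun k _ => hb _ (hmemk k))
          _ = n := by simp
      have h2 : ‖(n:ℂ)‖ = n := by
        simp [Complex.norm_natCast]
      rw [h2]
      rw [inv_mul_le_iff₀ (by positivity : (0:ℝ) < (n:ℝ))]
      simpa using h1
  -- package into a function and apply schwarz_pick_zero
  set h : ℂ → ℂ := fun w => ∑' j, a (n*j) * w ^ j with hh
  have hsum : ∀ w ∈ ball (0:ℂ) 1, HasSum (fun j => a (n*j) * w ^ j) (h w) := by
    intro w hw
    obtain ⟨S, hS1, _⟩ := key w hw
    rw [hh]
    simpa [hS1.tsum_eq] using hS1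
  have hbb : ∀ w ∈ ball (0:ℂ) 1, ‖h w‖ ≤ 1 := by
    intro w hw
    obtain ⟨S, hS1, hS2⟩ := key w hw
    rw [hh]
    simpa [hS1.tsum_eq] using hS2
  have := schwarz_pick_zero h (fun j => a (n*j)) hsum hbb
  simpa using this

set_option maxHeartbeats 1000000 in
/-- Bohr's inequality: if `f = ∑ aₙ zⁿ` is analytic on the unit disk with `|f| ≤ 1`,
then `∑ |aₙ| rⁿ ≤ 1` for `0 ≤ r ≤ 1/3`. -/
theorem bohr_inequality (f : ℂ → ℂ) (a : ℕ → ℂ)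
    (hexp : ∀ z ∈ ball (0 : ℂ) 1, HasSum (fun n => a n * z ^ n) (f z))
    (hana : AnalyticOn ℂ f (ball (0 : ℂ) 1))
    (hb : ∀ z ∈ ball (0 : ℂ) 1, ‖f z‖ ≤ 1)
    (r : ℝ) (hr0 : 0 ≤ r) (hr : r ≤ 1 / 3) :
    Summable (fun n => ‖a n‖ * r ^ n) ∧
      ∑' n, ‖a n‖ * r ^ n ≤ 1 := by
  have h0mem : (0:ℂ) ∈ ball (0:ℂ) 1 := by simp
  have ha0 : ‖a 0‖ ≤ 1 := by
    have h1 : HasSum (fun m => a m * (0:ℂ) ^ m) (a 0 * (0:ℂ) ^ 0) :=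
      hasSum_single 0 (by intro m hm; simp [hm])
    have h2 := (hexp 0 h0mem).unique h1
    have := hb 0 h0mem
    rw [h2] at this
    simpa using this
  set A := ‖a 0‖ with hA
  have hA0 : 0 ≤ A := norm_nonneg _
  have hcb : ∀ n, 1 ≤ n → ‖a n‖ ≤ 1 - A ^ 2 :=
    fun n hn => coeff_bound f a hexp hb n hn
  have hA21 : 1 - A ^ 2 ≤ 1 := by nlinarith
  have habs1 : ∀ n, ‖a n‖ ≤ 1 := by
    intro n
    rcases Nat.eq_zero_or_pos n with h | h
    · rw [h]; exact ha0
    · exact le_trans (hcb n h) hA21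
  have hr1 : r < 1 := lt_of_le_of_lt hr (by norm_num)
  have hsummable : Summable (fun n => ‖a n‖ * r ^ n) := by
    apply Summable.of_nonneg_of_le (fun n => by positivity)
      (fun n => ?_) (summable_geometric_of_lt_one hr0 hr1)
    calc ‖a n‖ * r ^ n ≤ 1 * r ^ n := by
          apply mul_le_mul_of_nonneg_right (habs1 n) (by positivity)
      _ = r ^ n := one_mul _
  refine ⟨hsummable, ?_⟩
  have hsplit := Summable.tsum_eq_zero_add hsummable
  rw [hsplit]
  have htailsum : Summable (fun n => ‖a (n+1)‖ * r ^ (n+1)) :=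
    (summable_nat_add_iff 1).2 hsummable
  have hgeom : Summable (fun n : ℕ => (1 - A ^ 2) * (r * r ^ n)) :=
    ((summable_geometric_of_lt_one hr0 hr1).mul_left r).mul_left _
  have htail : ∑' n, ‖a (n+1)‖ * r ^ (n+1)
      ≤ ∑' n : ℕ, (1 - A ^ 2) * (r * r ^ n) := by
    apply Summable.tsum_le_tsum _ htailsum hgeom
    intro n
    rw [pow_succ']
    apply mul_le_mul_of_nonneg_right (hcb (n+1) (by omega)) (by positivity)
  have hgeomval : ∑' n : ℕ, (1 - A ^ 2) * (r * r ^ n)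
      = (1 - A ^ 2) * r * (1 - r)⁻¹ := by
    rw [tsum_mul_left, tsum_mul_left, tsum_geometric_of_lt_one hr0 hr1]
    ring
  rw [hgeomval] at htail
  have hfrac : r * (1 - r)⁻¹ ≤ 1 / 2 := by
    rw [← div_eq_mul_inv, div_le_div_iff₀ (by linarith) (by norm_num)]
    linarith
  have hfinal : A * r ^ 0 + (1 - A ^ 2) * r * (1 - r)⁻¹ ≤ 1 := by
    have h1 : (1 - A ^ 2) * r * (1 - r)⁻¹ ≤ (1 - A ^ 2) * (1/2) := by
      rw [mul_assoc]
      apply mul_le_mul_of_nonneg_left hfrac (by nlinarith)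
    rw [pow_zero, mul_one]
    nlinarith
  calc ‖a 0‖ * r ^ 0 + ∑' n, ‖a (n+1)‖ * r ^ (n+1)
      ≤ A * r ^ 0 + (1 - A ^ 2) * r * (1 - r)⁻¹ := by
        apply add_le_add_right htail
    _ ≤ 1 := hfinal
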